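/- Let R be a commutative ring, m ≥ 1, and let A be a 2m×2m matrix over R with m×m blocks A11, A12, A21, A22, and Δ := det(A11) • A22 − A21 · adj(A11) · A12. Then det(A11)^(m−1) • B21 = − adj(Δ) · A21 · adj(A11), where B21 denotes the bottom-left m×m block of the adjugate matrix adj(A). -/
import Mathlib

open Matrix

section Aux

variable {m : ℕ}

private def lhsE {R : Type*} [CommRing R] (m : ℕ)
    (A11 A12 A21 A22 : Matrix (Fin m) (Fin m) R) : Matrix (Fin m) (Fin m) R :=
  A11.det ^ (m - 1) • (Matrix.fromBlocks A11 A12 A21 A22).adjugate.toBlocks₂₁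

private def rhsE {R : Type*} [CommRing R] (m : ℕ)
    (A11 A12 A21 A22 : Matrix (Fin m) (Fin m) R) : Matrix (Fin m) (Fin m) R :=
  -((A11.det • A22 - A21 * A11.adjugate * A12).adjugate * A21 * A11.adjugate)

private lemma mapMatrix_smul' {R S : Type*} [CommRing R] [CommRing S] (f : R →+* S)
    {n : Type*} [Fintype n] [DecidableEq n] (r : R) (M : Matrix n n R) :
    f.mapMatrix (r • M) = f r • f.mapMatrix M := by
  ext i j
  simp [RingHom.mapMatrix_apply, Matrix.map_apply]

private lemma mapMatrix_toBlocks₂₁ {R S : Type*} [CommRing R] [CommRing S] (f : R →+* S)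
    (M : Matrix (Fin m ⊕ Fin m) (Fin m ⊕ Fin m) R) :
    (f.mapMatrix M).toBlocks₂₁ = f.mapMatrix M.toBlocks₂₁ := rfl

private lemma mapMatrix_fromBlocks {R S : Type*} [CommRing R] [CommRing S] (f : R →+* S)
    (A11 A12 A21 A22 : Matrix (Fin m) (Fin m) R) :
    f.mapMatrix (fromBlocks A11 A12 A21 A22) =
      fromBlocks (f.mapMatrix A11) (f.mapMatrix A12) (f.mapMatrix A21) (f.mapMatrix A22) := by
  simp only [RingHom.mapMatrix_apply, Matrix.fromBlocks_map]

private lemma lhsE_map {R S : Type*} [CommRing R] [CommRing S] (f : R →+* S)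
    (A11 A12 A21 A22 : Matrix (Fin m) (Fin m) R) :
    f.mapMatrix (lhsE m A11 A12 A21 A22) =
      lhsE m (f.mapMatrix A11) (f.mapMatrix A12) (f.mapMatrix A21) (f.mapMatrix A22) := by
  unfold lhsE
  rw [mapMatrix_smul', map_pow, RingHom.map_det, ← mapMatrix_toBlocks₂₁, RingHom.map_adjugate,
    mapMatrix_fromBlocks]

private lemma rhsE_map {R S : Type*} [CommRing R] [CommRing S] (f : R →+* S)
    (A11 A12 A21 A22 : Matrix (Fin m) (Fin m) R) :
    f.mapMatrix (rhsE m A11 A12 A21 A22) =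
      rhsE m (f.mapMatrix A11) (f.mapMatrix A12) (f.mapMatrix A21) (f.mapMatrix A22) := by
  unfold rhsE
  rw [map_neg, _root_.map_mul, _root_.map_mul, RingHom.map_adjugate, RingHom.map_adjugate,
    map_sub, mapMatrix_smul', RingHom.map_det, _root_.map_mul, _root_.map_mul,
    RingHom.map_adjugate]

/-- The invertible case. -/
private lemma key_invertible {K : Type*} [CommRing K]
    (A11 A12 A21 A22 : Matrix (Fin m) (Fin m) K) [Invertible A11]
    [Invertible (A22 - A21 * ⅟A11 * A12)] :
    lhsE m A11 A12 A21 A22 = rhsE m A11 A12 A21 A22 := by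
  set S := A22 - A21 * ⅟A11 * A12 with hS
  letI : Invertible (fromBlocks A11 A12 A21 A22) := fromBlocks₁₁Invertible A11 A12 A21 A22
  letI : Invertible (A11.det) := A11.detInvertibleOfInvertible
  letI : Invertible ((fromBlocks A11 A12 A21 A22).det) :=
    (fromBlocks A11 A12 A21 A22).detInvertibleOfInvertible
  letI : Invertible (S.det) := S.detInvertibleOfInvertible
  have adjA11 : A11.adjugate = A11.det • ⅟A11 := by
    rw [invOf_eq, smul_smul, mul_invOf_self, one_smul]
  have adjS : S.adjugate = S.det • ⅟S := by
    rw [invOf_eq, smul_smul, mul_invOf_self, one_smul]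
  have adjA : (fromBlocks A11 A12 A21 A22).adjugate =
      (fromBlocks A11 A12 A21 A22).det • ⅟(fromBlocks A11 A12 A21 A22) := by
    rw [invOf_eq, smul_smul, mul_invOf_self, one_smul]
  have hDelta : A11.det • A22 - A21 * A11.adjugate * A12 = A11.det • S := by
    rw [adjA11, hS, smul_sub]
    congr 1
    rw [Matrix.mul_smul, Matrix.smul_mul]
  have hblk : (⅟(fromBlocks A11 A12 A21 A22)).toBlocks₂₁ = -(⅟S * A21 * ⅟A11) := by
    rw [invOf_fromBlocks₁₁_eq A11 A12 A21 A22]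
    simp [hS]
  unfold lhsE rhsE
  rw [adjA, hDelta, adjugate_smul, adjS, adjA11, det_fromBlocks₁₁]
  have h2 : ((A11.det * S.det) • ⅟(fromBlocks A11 A12 A21 A22)).toBlocks₂₁ =
      (A11.det * S.det) • (⅟(fromBlocks A11 A12 A21 A22)).toBlocks₂₁ := rfl
  rw [h2, hblk, Fintype.card_fin]
  simp only [Matrix.smul_mul, Matrix.mul_smul, smul_smul, smul_neg]
  congr 2
  ring

end Aux

/-- For a commutative ring `R`, `m ≥ 1`, and a `2m × 2m` matrix `A` over `R`
with `m × m` blocks `A11, A12, A21, A22`, letting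
`Δ = det(A11) • A22 - A21 * adj(A11) * A12`, the bottom-left block `B21` of `adj(A)`
satisfies `det(A11) ^ (m - 1) • B21 = - adj(Δ) * A21 * adj(A11)`. -/
theorem ffSchur_adjugate_block21 {R : Type*} [CommRing R] (m : ℕ) (hm : 1 ≤ m)
    (A11 A12 A21 A22 : Matrix (Fin m) (Fin m) R) :
    A11.det ^ (m - 1) • (Matrix.fromBlocks A11 A12 A21 A22).adjugate.toBlocks₂₁ =
      -((A11.det • A22 - A21 * A11.adjugate * A12).adjugate * A21 * A11.adjugate) := by
  let σ := (Fin m ⊕ Fin m) × (Fin m ⊕ Fin m)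
  let P := MvPolynomial σ ℤ
  let M : Matrix (Fin m ⊕ Fin m) (Fin m ⊕ Fin m) P := mvPolynomialX _ _ ℤ
  let K := FractionRing P
  let f : P →+* K := algebraMap P K
  have hf : Function.Injective f := IsFractionRing.injective P K
  have hMblocks : fromBlocks M.toBlocks₁₁ M.toBlocks₁₂ M.toBlocks₂₁ M.toBlocks₂₂ = M :=
    fromBlocks_toBlocks M
  -- the generic identity over `P`
  have hgen : lhsE m M.toBlocks₁₁ M.toBlocks₁₂ M.toBlocks₂₁ M.toBlocks₂₂ =
      rhsE m M.toBlocks₁₁ M.toBlocks₁₂ M.toBlocks₂₁ M.toBlocks₂₂ := by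
    have hinj : Function.Injective
        (fun X : Matrix (Fin m) (Fin m) P => f.mapMatrix X) := by
      intro X Y h
      refine Matrix.ext fun i j => hf ?_
      have := congr_fun (congr_fun h i) j
      simpa [RingHom.mapMatrix_apply, Matrix.map_apply] using this
    apply hinj
    show (f.mapMatrix _ : Matrix (Fin m) (Fin m) K) = f.mapMatrix _
    rw [lhsE_map, rhsE_map]
    -- determinants of generic matrices are nonzero
    have hdet11 : (M.toBlocks₁₁).det ≠ 0 := by
      have hre : M.toBlocks₁₁ =
          (MvPolynomial.rename (Prod.map Sum.inl Sum.inl) :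
            MvPolynomial ((Fin m) × (Fin m)) ℤ →ₐ[ℤ] P).toRingHom.mapMatrix
            (mvPolynomialX (Fin m) (Fin m) ℤ) := by
        ext i j
        simp [M, Matrix.toBlocks₁₁, mvPolynomialX_apply, RingHom.mapMatrix_apply,
          Matrix.map_apply]
      rw [hre, ← RingHom.map_det]
      intro h
      exact det_mvPolynomialX_ne_zero (Fin m) ℤ
        (MvPolynomial.rename_injective _
          (Function.Injective.prodMap Sum.inl_injective Sum.inl_injective)
          (by simpa using h))
    have hdetM : M.det ≠ 0 := det_mvPolynomialX_ne_zero _ ℤ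
    -- hence the mapped matrices are invertible over the fraction field
    letI : Invertible (f.mapMatrix M.toBlocks₁₁) := by
      apply invertibleOfIsUnitDet
      rw [← RingHom.map_det, isUnit_iff_ne_zero]
      exact fun h => hdet11 (by simpa using hf (by simpa using h))
    letI hAinv : Invertible (fromBlocks (f.mapMatrix M.toBlocks₁₁) (f.mapMatrix M.toBlocks₁₂)
        (f.mapMatrix M.toBlocks₂₁) (f.mapMatrix M.toBlocks₂₂)) := by
      apply invertibleOfIsUnitDet
      rw [← mapMatrix_fromBlocks, hMblocks, ← RingHom.map_det, isUnit_iff_ne_zero]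
      exact fun h => hdetM (by simpa using hf (by simpa using h))
    letI : Invertible (f.mapMatrix M.toBlocks₂₂ -
        f.mapMatrix M.toBlocks₂₁ * ⅟(f.mapMatrix M.toBlocks₁₁) * f.mapMatrix M.toBlocks₁₂) :=
      invertibleOfFromBlocks₁₁Invertible _ _ _ _
    exact key_invertible _ _ _ _
  -- specialize the generic identity to the given matrices
  let φ : P →+* R :=
    MvPolynomial.eval₂Hom (Int.castRingHom R) (fun p : σ => fromBlocks A11 A12 A21 A22 p.1 p.2)
  have hev := congrArg (fun X => φ.mapMatrix X) hgen
  simp only [lhsE_map, rhsE_map] at hev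
  have e11 : φ.mapMatrix M.toBlocks₁₁ = A11 := by
    ext i j
    exact MvPolynomial.eval₂Hom_X' _ _ _
  have e12 : φ.mapMatrix M.toBlocks₁₂ = A12 := by
    ext i j
    exact MvPolynomial.eval₂Hom_X' _ _ _
  have e21 : φ.mapMatrix M.toBlocks₂₁ = A21 := by
    ext i j
    exact MvPolynomial.eval₂Hom_X' _ _ _
  have e22 : φ.mapMatrix M.toBlocks₂₂ = A22 := by
    ext i j
    exact MvPolynomial.eval₂Hom_X' _ _ _
  rw [e11, e12, e21, e22] at hev
  exact hev
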